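/- A system Σ in driving variable form is an implementation of the contract (A, G) if and only if it is an implementation of the contract (A, A ∘ G), where A ∘ G denotes the composition of the assumptions with the guarantees. -/

import Mathlib

/-- A linear system in driving variable form `ẋ = A x + G d`, `w = C x`, `0 = H x`. -/
structure DVSystem (X W D Y : Type)
    [AddCommGroup X] [Module ℝ X] [AddCommGroup W] [Module ℝ W]
    [AddCommGroup D] [Module ℝ D] [AddCommGroup Y] [Module ℝ Y] where
  A : X →ₗ[ℝ] X
  G : D →ₗ[ℝ] X
  C : X →ₗ[ℝ] W
  H : X →ₗ[ℝ] Y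

namespace DVSystem

section basic

variable {X W D Y : Type}
  [AddCommGroup X] [Module ℝ X] [AddCommGroup W] [Module ℝ W]
  [AddCommGroup D] [Module ℝ D] [AddCommGroup Y] [Module ℝ Y]

/-- A subspace `U` is consistent-admissible if `A U ⊆ U + im G` and `U ⊆ ker H`. -/
def Admissible (P : DVSystem X W D Y) (U : Submodule ℝ X) : Prop :=
  U.map P.A ≤ U ⊔ LinearMap.range P.G ∧ U ≤ LinearMap.ker P.H

/-- The consistent subspace `V*`: the largest consistent-admissible subspace. -/
def V (P : DVSystem X W D Y) : Submodule ℝ X :=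
  sSup {U | P.Admissible U}

end basic

section sim

variable {W : Type} [AddCommGroup W] [Module ℝ W]
variable {X₁ D₁ Y₁ : Type} [AddCommGroup X₁] [Module ℝ X₁]
  [AddCommGroup D₁] [Module ℝ D₁] [AddCommGroup Y₁] [Module ℝ Y₁]
variable {X₂ D₂ Y₂ : Type} [AddCommGroup X₂] [Module ℝ X₂]
  [AddCommGroup D₂] [Module ℝ D₂] [AddCommGroup Y₂] [Module ℝ Y₂]

/-- Items (i)-(ii) of the (algebraic) definition of a simulation relation. -/
def SimConds (P₁ : DVSystem X₁ W D₁ Y₁) (P₂ : DVSystem X₂ W D₂ Y₂)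
    (S : Submodule ℝ (X₁ × X₂)) : Prop :=
  ∀ x₁ x₂, (x₁, x₂) ∈ S →
    (∀ d₁ : D₁, P₁.A x₁ + P₁.G d₁ ∈ P₁.V →
      ∃ d₂ : D₂, P₂.A x₂ + P₂.G d₂ ∈ P₂.V ∧
        (P₁.A x₁ + P₁.G d₁, P₂.A x₂ + P₂.G d₂) ∈ S) ∧
    P₁.C x₁ = P₂.C x₂

/-- `S` is a simulation relation of `P₁` by `P₂`. -/
def IsSimRel (P₁ : DVSystem X₁ W D₁ Y₁) (P₂ : DVSystem X₂ W D₂ Y₂)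
    (S : Submodule ℝ (X₁ × X₂)) : Prop :=
  S.map (LinearMap.fst ℝ X₁ X₂) ≤ P₁.V ∧ S.map (LinearMap.snd ℝ X₁ X₂) ≤ P₂.V ∧
    SimConds P₁ P₂ S

/-- `S` is a full simulation relation of `P₁` by `P₂`: in addition `π₁(S) = V₁*`. -/
def IsFullSimRel (P₁ : DVSystem X₁ W D₁ Y₁) (P₂ : DVSystem X₂ W D₂ Y₂)
    (S : Submodule ℝ (X₁ × X₂)) : Prop :=
  IsSimRel P₁ P₂ S ∧ S.map (LinearMap.fst ℝ X₁ X₂) = P₁.V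

/-- `P₁ ≼ P₂`: `P₁` is simulated by `P₂`. -/
def Simulates (P₁ : DVSystem X₁ W D₁ Y₁) (P₂ : DVSystem X₂ W D₂ Y₂) : Prop :=
  ∃ S : Submodule ℝ (X₁ × X₂), IsFullSimRel P₁ P₂ S

/-- The composition `P₁ ∘ P₂` obtained by sharing the external variable `w₁ = w₂`. -/
noncomputable def comp (P₁ : DVSystem X₁ W D₁ Y₁) (P₂ : DVSystem X₂ W D₂ Y₂) :
    DVSystem (X₁ × X₂) W (D₁ × D₂) (Y₁ × Y₂ × W) where
  A := P₁.A.prodMap P₂.A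
  G := P₁.G.prodMap P₂.G
  C := (1/2 : ℝ) • (P₁.C ∘ₗ LinearMap.fst ℝ X₁ X₂ + P₂.C ∘ₗ LinearMap.snd ℝ X₁ X₂)
  H := (P₁.H ∘ₗ LinearMap.fst ℝ X₁ X₂).prod
    ((P₂.H ∘ₗ LinearMap.snd ℝ X₁ X₂).prod
      (P₁.C ∘ₗ LinearMap.fst ℝ X₁ X₂ - P₂.C ∘ₗ LinearMap.snd ℝ X₁ X₂))

end sim

section relcomp

variable {X₁ X₂ X₃ : Type} [AddCommGroup X₁] [Module ℝ X₁]
  [AddCommGroup X₂] [Module ℝ X₂] [AddCommGroup X₃] [Module ℝ X₃]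

/-- Composition of linear relations:
`{(x₁, x₃) | ∃ x₂, (x₁, x₂) ∈ S₁₂ ∧ (x₂, x₃) ∈ S₂₃}`. -/
def relComp (S₁₂ : Submodule ℝ (X₁ × X₂)) (S₂₃ : Submodule ℝ (X₂ × X₃)) :
    Submodule ℝ (X₁ × X₃) where
  carrier := {p | ∃ x₂, (p.1, x₂) ∈ S₁₂ ∧ (x₂, p.2) ∈ S₂₃}
  zero_mem' := ⟨0, S₁₂.zero_mem, S₂₃.zero_mem⟩
  add_mem' := by
    rintro a b ⟨y, hy1, hy2⟩ ⟨z, hz1, hz2⟩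
    exact ⟨y + z, S₁₂.add_mem hy1 hz1, S₂₃.add_mem hy2 hz2⟩
  smul_mem' := by
    rintro c a ⟨y, h1, h2⟩
    exact ⟨c • y, S₁₂.smul_mem c h1, S₂₃.smul_mem c h2⟩

/-- The pairing `{(x, (x₁, x₂)) | (x, x₁) ∈ S₁ ∧ (x, x₂) ∈ S₂}` of two relations. -/
def pairRel (S₁ : Submodule ℝ (X₁ × X₂)) (S₂ : Submodule ℝ (X₁ × X₃)) :
    Submodule ℝ (X₁ × X₂ × X₃) where
  carrier := {p | (p.1, p.2.1) ∈ S₁ ∧ (p.1, p.2.2) ∈ S₂}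
  zero_mem' := ⟨S₁.zero_mem, S₂.zero_mem⟩
  add_mem' := by
    rintro a b ⟨ha1, ha2⟩ ⟨hb1, hb2⟩
    exact ⟨S₁.add_mem ha1 hb1, S₂.add_mem ha2 hb2⟩
  smul_mem' := by
    rintro c a ⟨h1, h2⟩
    exact ⟨S₁.smul_mem c h1, S₂.smul_mem c h2⟩

end relcomp

section contract

variable {W : Type} [AddCommGroup W] [Module ℝ W]
variable {X D Y Xa Da Ya Xg Dg Yg : Type}
  [AddCommGroup X] [Module ℝ X] [AddCommGroup D] [Module ℝ D]
  [AddCommGroup Y] [Module ℝ Y]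
  [AddCommGroup Xa] [Module ℝ Xa] [AddCommGroup Da] [Module ℝ Da]
  [AddCommGroup Ya] [Module ℝ Ya]
  [AddCommGroup Xg] [Module ℝ Xg] [AddCommGroup Dg] [Module ℝ Dg]
  [AddCommGroup Yg] [Module ℝ Yg]

/-- `Sys` implements the contract `(Ass, Gar)` if `E ∘ Sys ≼ Gar` for every
compatible environment `E`, i.e., every environment with `E ≼ Ass`. -/
def Implements (Sys : DVSystem X W D Y)
    (Ass : DVSystem Xa W Da Ya) (Gar : DVSystem Xg W Dg Yg) : Prop :=
  ∀ (Xe De Ye : Type) [AddCommGroup Xe] [Module ℝ Xe] [FiniteDimensional ℝ Xe]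
    [AddCommGroup De] [Module ℝ De] [FiniteDimensional ℝ De]
    [AddCommGroup Ye] [Module ℝ Ye] [FiniteDimensional ℝ Ye]
    (E : DVSystem Xe W De Ye),
    Simulates E Ass → Simulates (comp E Sys) Gar

end contract

section refine

variable {W : Type} [AddCommGroup W] [Module ℝ W]
variable {Xa Da Ya Xg Dg Yg Xa' Da' Ya' Xg' Dg' Yg' : Type}
  [AddCommGroup Xa] [Module ℝ Xa] [AddCommGroup Da] [Module ℝ Da]
  [AddCommGroup Ya] [Module ℝ Ya]
  [AddCommGroup Xg] [Module ℝ Xg] [AddCommGroup Dg] [Module ℝ Dg]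
  [AddCommGroup Yg] [Module ℝ Yg]
  [AddCommGroup Xa'] [Module ℝ Xa'] [AddCommGroup Da'] [Module ℝ Da']
  [AddCommGroup Ya'] [Module ℝ Ya']
  [AddCommGroup Xg'] [Module ℝ Xg'] [AddCommGroup Dg'] [Module ℝ Dg']
  [AddCommGroup Yg'] [Module ℝ Yg']

/-- The contract `(Ass', Gar')` refines the contract `(Ass, Gar)`:
`Ass ≼ Ass'` and `Ass ∘ Gar' ≼ Gar`. -/
def Refines (Ass' : DVSystem Xa' W Da' Ya') (Gar' : DVSystem Xg' W Dg' Yg')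
    (Ass : DVSystem Xa W Da Ya) (Gar : DVSystem Xg W Dg Yg) : Prop :=
  Simulates Ass Ass' ∧ Simulates (comp Ass Gar') Gar

end refine

end DVSystem

open DVSystem

namespace DVSystem

section aux1

variable {X W D Y : Type}
  [AddCommGroup X] [Module ℝ X] [AddCommGroup W] [Module ℝ W]
  [AddCommGroup D] [Module ℝ D] [AddCommGroup Y] [Module ℝ Y]

lemma V_admissible (P : DVSystem X W D Y) : P.Admissible P.V := by
  constructor
  · rw [Submodule.map_le_iff_le_comap]
    refine sSup_le fun U hU => ?_
    exact le_trans (Submodule.map_le_iff_le_comap.mp hU.1)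
      (Submodule.comap_mono (sup_le_sup_right (le_sSup hU) _))
  · exact sSup_le fun U hU => hU.2

lemma V_step (P : DVSystem X W D Y) {x : X} (hx : x ∈ P.V) :
    ∃ d, P.A x + P.G d ∈ P.V := by
  have := (V_admissible P).1 (Submodule.mem_map_of_mem hx)
  rw [Submodule.mem_sup] at this
  obtain ⟨v, hv, g, ⟨d, rfl⟩, h⟩ := this
  refine ⟨-d, ?_⟩
  have : P.A x + P.G (-d) = v := by rw [map_neg, ← h]; abel
  rwa [this]

end aux1
end DVSystem
namespace DVSystem
section aux2

variable {W : Type} [AddCommGroup W] [Module ℝ W]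
variable {X₁ D₁ Y₁ : Type} [AddCommGroup X₁] [Module ℝ X₁]
  [AddCommGroup D₁] [Module ℝ D₁] [AddCommGroup Y₁] [Module ℝ Y₁]
variable {X₂ D₂ Y₂ : Type} [AddCommGroup X₂] [Module ℝ X₂]
  [AddCommGroup D₂] [Module ℝ D₂] [AddCommGroup Y₂] [Module ℝ Y₂]

lemma V_comp_props (P₁ : DVSystem X₁ W D₁ Y₁) (P₂ : DVSystem X₂ W D₂ Y₂)
    {z : X₁ × X₂} (hz : z ∈ (comp P₁ P₂).V) :
    P₁.H z.1 = 0 ∧ P₂.H z.2 = 0 ∧ P₁.C z.1 = P₂.C z.2 := by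
  have h := (V_admissible (comp P₁ P₂)).2 hz
  rw [LinearMap.mem_ker] at h
  simp only [comp, LinearMap.prod_apply, LinearMap.coe_comp, Function.comp_apply,
    LinearMap.fst_apply, LinearMap.snd_apply, LinearMap.sub_apply, Function.prod,
    Prod.mk_eq_zero] at h
  exact ⟨h.1, h.2.1, sub_eq_zero.mp h.2.2⟩

lemma V_comp_fst (P₁ : DVSystem X₁ W D₁ Y₁) (P₂ : DVSystem X₂ W D₂ Y₂)
    {z : X₁ × X₂} (hz : z ∈ (comp P₁ P₂).V) : z.1 ∈ P₁.V := by
  refine le_sSup (s := {U | P₁.Admissible U}) ?_ (Submodule.mem_map_of_mem (f := LinearMap.fst ℝ X₁ X₂) hz)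
  constructor
  · rintro _ ⟨_, ⟨z, hz, rfl⟩, rfl⟩
    have h := (V_admissible (comp P₁ P₂)).1 (Submodule.mem_map_of_mem hz)
    rw [Submodule.mem_sup] at h
    obtain ⟨v, hv, g, ⟨d, rfl⟩, h⟩ := h
    have h1 : P₁.A z.1 = v.1 + P₁.G d.1 := (congrArg Prod.fst h).symm
    exact Submodule.mem_sup.mpr ⟨v.1, Submodule.mem_map_of_mem hv, P₁.G d.1, ⟨d.1, rfl⟩, h1.symm⟩
  · rintro _ ⟨z, hz, rfl⟩
    exact (V_comp_props P₁ P₂ hz).1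

lemma V_comp_snd (P₁ : DVSystem X₁ W D₁ Y₁) (P₂ : DVSystem X₂ W D₂ Y₂)
    {z : X₁ × X₂} (hz : z ∈ (comp P₁ P₂).V) : z.2 ∈ P₂.V := by
  refine le_sSup (s := {U | P₂.Admissible U}) ?_ (Submodule.mem_map_of_mem (f := LinearMap.snd ℝ X₁ X₂) hz)
  constructor
  · rintro _ ⟨_, ⟨z, hz, rfl⟩, rfl⟩
    have h := (V_admissible (comp P₁ P₂)).1 (Submodule.mem_map_of_mem hz)
    rw [Submodule.mem_sup] at h
    obtain ⟨v, hv, g, ⟨d, rfl⟩, h⟩ := h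
    have h1 : P₂.A z.2 = v.2 + P₂.G d.2 := (congrArg Prod.snd h).symm
    exact Submodule.mem_sup.mpr ⟨v.2, Submodule.mem_map_of_mem hv, P₂.G d.2, ⟨d.2, rfl⟩, h1.symm⟩
  · rintro _ ⟨z, hz, rfl⟩
    exact (V_comp_props P₁ P₂ hz).2.1

lemma V_le_ker_H (P : DVSystem X₁ W D₁ Y₁) : P.V ≤ LinearMap.ker P.H := (V_admissible P).2

end aux2
end DVSystem
namespace DVSystem
section aux3

variable {W : Type} [AddCommGroup W] [Module ℝ W]
variable {X₁ D₁ Y₁ : Type} [AddCommGroup X₁] [Module ℝ X₁]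
  [AddCommGroup D₁] [Module ℝ D₁] [AddCommGroup Y₁] [Module ℝ Y₁]
variable {X₂ D₂ Y₂ : Type} [AddCommGroup X₂] [Module ℝ X₂]
  [AddCommGroup D₂] [Module ℝ D₂] [AddCommGroup Y₂] [Module ℝ Y₂]
variable {X₃ D₃ Y₃ : Type} [AddCommGroup X₃] [Module ℝ X₃]
  [AddCommGroup D₃] [Module ℝ D₃] [AddCommGroup Y₃] [Module ℝ Y₃]

lemma mem_map_fst_iff {S : Submodule ℝ (X₁ × X₂)} {x : X₁} :
    x ∈ S.map (LinearMap.fst ℝ X₁ X₂) ↔ ∃ y, (x, y) ∈ S := by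
  constructor
  · rintro ⟨z, hz, rfl⟩; exact ⟨z.2, hz⟩
  · rintro ⟨y, hy⟩; exact ⟨(x, y), hy, rfl⟩

lemma mem_map_snd_iff {S : Submodule ℝ (X₁ × X₂)} {y : X₂} :
    y ∈ S.map (LinearMap.snd ℝ X₁ X₂) ↔ ∃ x, (x, y) ∈ S := by
  constructor
  · rintro ⟨z, hz, rfl⟩; exact ⟨z.1, hz⟩
  · rintro ⟨x, hx⟩; exact ⟨(x, y), hx, rfl⟩

lemma simulates_trans {P₁ : DVSystem X₁ W D₁ Y₁} {P₂ : DVSystem X₂ W D₂ Y₂}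
    {P₃ : DVSystem X₃ W D₃ Y₃} (h12 : Simulates P₁ P₂) (h23 : Simulates P₂ P₃) :
    Simulates P₁ P₃ := by
  obtain ⟨S, ⟨⟨_, hS2, hSc⟩, hSf⟩⟩ := h12
  obtain ⟨T, ⟨⟨_, hT2, hTc⟩, hTf⟩⟩ := h23
  refine ⟨relComp S T, ⟨⟨?_, ?_, ?_⟩, le_antisymm ?_ ?_⟩⟩
  · intro x hx
    rw [mem_map_fst_iff] at hx
    obtain ⟨y, z, hz, _⟩ := hx
    rw [← hSf]
    exact mem_map_fst_iff.mpr ⟨z, hz⟩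
  · intro y hy
    rw [mem_map_snd_iff] at hy
    obtain ⟨x, z, _, hz⟩ := hy
    exact hT2 (mem_map_snd_iff.mpr ⟨z, hz⟩)
  · rintro x₁ x₃ ⟨x₂, h12, h23⟩
    refine ⟨?_, ((hSc _ _ h12).2).trans (hTc _ _ h23).2⟩
    intro d₁ hd₁
    obtain ⟨d₂, hd₂, hm₂⟩ := (hSc _ _ h12).1 d₁ hd₁
    obtain ⟨d₃, hd₃, hm₃⟩ := (hTc _ _ h23).1 d₂ hd₂
    exact ⟨d₃, hd₃, ⟨_, hm₂, hm₃⟩⟩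
  · intro x hx
    rw [mem_map_fst_iff] at hx
    obtain ⟨y, z, hz, _⟩ := hx
    rw [← hSf]
    exact mem_map_fst_iff.mpr ⟨z, hz⟩
  · intro x hx
    rw [← hSf] at hx
    rw [mem_map_fst_iff] at hx
    obtain ⟨x₂, hx₂⟩ := hx
    have hx₂V : x₂ ∈ P₂.V := hS2 (mem_map_snd_iff.mpr ⟨x, hx₂⟩)
    rw [← hTf, mem_map_fst_iff] at hx₂V
    obtain ⟨x₃, hx₃⟩ := hx₂V
    exact mem_map_fst_iff.mpr ⟨x₃, x₂, hx₂, hx₃⟩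

lemma comp_simulates_snd (P₁ : DVSystem X₁ W D₁ Y₁) (P₂ : DVSystem X₂ W D₂ Y₂) :
    Simulates (comp P₁ P₂) P₂ := by
  classical
  set S : Submodule ℝ ((X₁ × X₂) × X₂) :=
    Submodule.comap (LinearMap.fst ℝ (X₁ × X₂) X₂) (comp P₁ P₂).V ⊓
      LinearMap.ker ((LinearMap.snd ℝ X₁ X₂).comp (LinearMap.fst ℝ (X₁ × X₂) X₂) -
        LinearMap.snd ℝ (X₁ × X₂) X₂) with hSdef
  have memS : ∀ p : (X₁ × X₂) × X₂, p ∈ S ↔ p.1 ∈ (comp P₁ P₂).V ∧ p.1.2 = p.2 := by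
    intro p
    simp [hSdef, Submodule.mem_inf, LinearMap.mem_ker, sub_eq_zero]
  refine ⟨S, ⟨⟨?_, ?_, ?_⟩, le_antisymm ?_ ?_⟩⟩
  · intro x hx
    rw [mem_map_fst_iff] at hx
    obtain ⟨y, hy⟩ := hx
    exact ((memS _).mp hy).1
  · intro y hy
    rw [mem_map_snd_iff] at hy
    obtain ⟨x, hx⟩ := hy
    obtain ⟨hx1, hx2⟩ := (memS _).mp hx
    have h2 : x.2 = y := hx2
    exact h2 ▸ V_comp_snd P₁ P₂ hx1
  · intro p y hp
    obtain ⟨hp1, hp2⟩ := (memS _).mp hp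
    replace hp1 : p ∈ (comp P₁ P₂).V := hp1
    replace hp2 : p.2 = y := hp2
    subst hp2
    constructor
    · intro d hd
      refine ⟨d.2, V_comp_snd P₁ P₂ hd, ?_⟩
      rw [memS]
      exact ⟨hd, rfl⟩
    · have hC : P₁.C p.1 = P₂.C p.2 := (V_comp_props P₁ P₂ hp1).2.2
      show (1/2 : ℝ) • (P₁.C p.1 + P₂.C p.2) = P₂.C p.2
      rw [hC, ← two_smul ℝ, smul_smul]
      norm_num
  · intro x hx
    rw [mem_map_fst_iff] at hx
    obtain ⟨y, hy⟩ := hx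
    exact ((memS _).mp hy).1
  · intro p hp
    exact mem_map_fst_iff.mpr ⟨p.2, (memS _).mpr ⟨hp, rfl⟩⟩

end aux3
end DVSystem
namespace DVSystem
section aux4

variable {W : Type} [AddCommGroup W] [Module ℝ W]
variable {Xe De Ye : Type} [AddCommGroup Xe] [Module ℝ Xe]
  [AddCommGroup De] [Module ℝ De] [AddCommGroup Ye] [Module ℝ Ye]
variable {X D Y : Type} [AddCommGroup X] [Module ℝ X]
  [AddCommGroup D] [Module ℝ D] [AddCommGroup Y] [Module ℝ Y]
variable {Xa Da Ya : Type} [AddCommGroup Xa] [Module ℝ Xa]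
  [AddCommGroup Da] [Module ℝ Da] [AddCommGroup Ya] [Module ℝ Ya]
variable {Xg Dg Yg : Type} [AddCommGroup Xg] [Module ℝ Xg]
  [AddCommGroup Dg] [Module ℝ Dg] [AddCommGroup Yg] [Module ℝ Yg]

lemma comp_lift {E : DVSystem Xe W De Ye} {Sys : DVSystem X W D Y}
    {Ass : DVSystem Xa W Da Ya} {Gar : DVSystem Xg W Dg Yg}
    (hE : Simulates E Ass) (hG : Simulates (comp E Sys) Gar) :
    Simulates (comp E Sys) (comp Ass Gar) := by
  obtain ⟨Se, ⟨⟨_, hSe2, hSec⟩, hSef⟩⟩ := hE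
  obtain ⟨S₁, ⟨⟨_, hS12, hS1c⟩, hS1f⟩⟩ := hG
  set S : Submodule ℝ ((Xe × X) × (Xa × Xg)) :=
    Submodule.comap
      (((LinearMap.fst ℝ Xe X).comp (LinearMap.fst ℝ (Xe × X) (Xa × Xg))).prod
        ((LinearMap.fst ℝ Xa Xg).comp (LinearMap.snd ℝ (Xe × X) (Xa × Xg)))) Se ⊓
    Submodule.comap
      ((LinearMap.fst ℝ (Xe × X) (Xa × Xg)).prod
        ((LinearMap.snd ℝ Xa Xg).comp (LinearMap.snd ℝ (Xe × X) (Xa × Xg)))) S₁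
    with hSdef
  have memS : ∀ z : (Xe × X) × (Xa × Xg),
      z ∈ S ↔ (z.1.1, z.2.1) ∈ Se ∧ (z.1, z.2.2) ∈ S₁ := by
    intro z
    simp [hSdef, Submodule.mem_inf, Submodule.mem_comap, LinearMap.prod_apply]
  -- half-sum identity on the consistent subspace of `comp E Sys`
  have hhalf : ∀ p : Xe × X, p ∈ (comp E Sys).V → (comp E Sys).C p = E.C p.1 := by
    intro p hp
    have hce : E.C p.1 = Sys.C p.2 := (V_comp_props E Sys hp).2.2
    show (1/2 : ℝ) • (E.C p.1 + Sys.C p.2) = E.C p.1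
    rw [← hce, ← two_smul ℝ, smul_smul]
    norm_num
  -- the step construction
  have hstep : ∀ z : (Xe × X) × (Xa × Xg), z ∈ S → ∀ d : De × D,
      (comp E Sys).A z.1 + (comp E Sys).G d ∈ (comp E Sys).V →
      ∃ d' : Da × Dg,
        ((comp E Sys).A z.1 + (comp E Sys).G d,
          (comp Ass Gar).A z.2 + (comp Ass Gar).G d') ∈ S := by
    intro z hz d hd
    obtain ⟨hze, hz1⟩ := (memS z).mp hz
    have he : E.A z.1.1 + E.G d.1 ∈ E.V := V_comp_fst E Sys hd
    obtain ⟨da, hda, hmema⟩ := (hSec _ _ hze).1 d.1 he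
    obtain ⟨dg, hdg, hmemg⟩ := (hS1c _ _ hz1).1 d hd
    exact ⟨(da, dg), (memS _).mpr ⟨hmema, hmemg⟩⟩
  -- the projection of S to the second component is admissible for comp Ass Gar
  have hCeq : ∀ z : (Xe × X) × (Xa × Xg), z ∈ S →
      Ass.C z.2.1 = E.C z.1.1 ∧ Gar.C z.2.2 = E.C z.1.1 ∧ z.1 ∈ (comp E Sys).V := by
    intro z hz
    obtain ⟨hze, hz1⟩ := (memS z).mp hz
    have hz1V : z.1 ∈ (comp E Sys).V := hS1f ▸ mem_map_fst_iff.mpr ⟨z.2.2, hz1⟩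
    refine ⟨((hSec _ _ hze).2).symm, ?_, hz1V⟩
    rw [← (hS1c _ _ hz1).2, hhalf z.1 hz1V]
  have hTadm : Admissible (comp Ass Gar)
      (S.map (LinearMap.snd ℝ (Xe × X) (Xa × Xg))) := by
    constructor
    · rintro _ ⟨_, ⟨z, hz, rfl⟩, rfl⟩
      have hz1V : z.1 ∈ (comp E Sys).V := (hCeq z hz).2.2
      obtain ⟨d, hd⟩ := V_step (comp E Sys) hz1V
      obtain ⟨d', hmem⟩ := hstep z hz d hd
      refine Submodule.mem_sup.mpr
        ⟨(comp Ass Gar).A z.2 + (comp Ass Gar).G d',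
          mem_map_snd_iff.mpr ⟨_, hmem⟩,
          (comp Ass Gar).G (-d'), ⟨-d', rfl⟩, ?_⟩
      rw [map_neg]; abel
    · rintro _ ⟨z, hz, rfl⟩
      obtain ⟨hze, hz1⟩ := (memS z).mp hz
      rw [LinearMap.mem_ker]
      have hHa : Ass.H z.2.1 = 0 :=
        (V_admissible Ass).2 (hSe2 (mem_map_snd_iff.mpr ⟨z.1.1, hze⟩))
      have hHg : Gar.H z.2.2 = 0 :=
        (V_admissible Gar).2 (hS12 (mem_map_snd_iff.mpr ⟨z.1, hz1⟩))
      obtain ⟨hCa, hCg, _⟩ := hCeq z hz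
      show (Ass.H z.2.1, Gar.H z.2.2, Ass.C z.2.1 - Gar.C z.2.2) = 0
      rw [hHa, hHg, hCa, hCg, sub_self]
      rfl
  have hTle : S.map (LinearMap.snd ℝ (Xe × X) (Xa × Xg)) ≤ (comp Ass Gar).V :=
    le_sSup hTadm
  refine ⟨S, ⟨⟨?_, hTle, ?_⟩, le_antisymm ?_ ?_⟩⟩
  · rintro _ ⟨z, hz, rfl⟩
    exact (hCeq z hz).2.2
  · intro p q hpq
    constructor
    · intro d hd
      obtain ⟨d', hmem⟩ := hstep (p, q) hpq d hd
      exact ⟨d', hTle (mem_map_snd_iff.mpr ⟨_, hmem⟩), hmem⟩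
    · obtain ⟨hCa, hCg, hz1V⟩ := hCeq (p, q) hpq
      rw [hhalf p hz1V]
      show E.C p.1 = (1/2 : ℝ) • (Ass.C q.1 + Gar.C q.2)
      rw [hCa, hCg, ← two_smul ℝ, smul_smul]
      norm_num
  · rintro _ ⟨z, hz, rfl⟩
    exact (hCeq z hz).2.2
  · intro p hp
    have hpe : p.1 ∈ E.V := V_comp_fst E Sys hp
    rw [← hSef, mem_map_fst_iff] at hpe
    obtain ⟨xa, hxa⟩ := hpe
    have hp1 : p ∈ (comp E Sys).V := hp
    rw [← hS1f, mem_map_fst_iff] at hp1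
    obtain ⟨xg, hxg⟩ := hp1
    exact mem_map_fst_iff.mpr ⟨(xa, xg), (memS _).mpr ⟨hxa, hxg⟩⟩

end aux4
end DVSystem
/-- `Σ` implements `(Ass, Gar)` iff it implements `(Ass, Ass ∘ Gar)`. -/
theorem implements_iff_implements_comp {W : Type} [AddCommGroup W] [Module ℝ W] [FiniteDimensional ℝ W]
    {X D Y : Type} [AddCommGroup X] [Module ℝ X] [FiniteDimensional ℝ X]
    [AddCommGroup D] [Module ℝ D] [FiniteDimensional ℝ D]
    [AddCommGroup Y] [Module ℝ Y] [FiniteDimensional ℝ Y]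
    {Xa Da Ya : Type} [AddCommGroup Xa] [Module ℝ Xa] [FiniteDimensional ℝ Xa]
    [AddCommGroup Da] [Module ℝ Da] [FiniteDimensional ℝ Da]
    [AddCommGroup Ya] [Module ℝ Ya] [FiniteDimensional ℝ Ya]
    {Xg Dg Yg : Type} [AddCommGroup Xg] [Module ℝ Xg] [FiniteDimensional ℝ Xg]
    [AddCommGroup Dg] [Module ℝ Dg] [FiniteDimensional ℝ Dg]
    [AddCommGroup Yg] [Module ℝ Yg] [FiniteDimensional ℝ Yg]
    (Sys : DVSystem X W D Y) (Ass : DVSystem Xa W Da Ya) (Gar : DVSystem Xg W Dg Yg) :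
    Implements Sys Ass Gar ↔ Implements Sys Ass (comp Ass Gar) := by

  constructor
  · intro h Xe De Ye _ _ _ _ _ _ _ _ _ Env hEnv
    exact comp_lift hEnv (h Xe De Ye Env hEnv)
  · intro h Xe De Ye _ _ _ _ _ _ _ _ _ Env hEnv
    exact simulates_trans (h Xe De Ye Env hEnv) (comp_simulates_snd Ass Gar)
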